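/- Let A be a band operator with band width Γ₀ and (v_n) an inflating sequence for 𝒴. Then for each n, R_{v_n} P_{Y_n} A P_{Y_n} R_{v_n}⁻¹ is a band operator with band width Γ₀, and the strong sum Op((P_{Y_n} A P_{Y_n})) = Σ_n R_{v_n} P_{Y_n} A P_{Y_n} R_{v_n}⁻¹ is a band operator with band width Γ₀. -/

import Mathlib

open Filter Topology

/-- `A` has band width `Γ₀`: the matrix kernel `k_A(t,s) = (A δ_s)(t)` vanishes
unless `t s⁻¹ ∈ Γ₀`. -/
def HasBandWidth {Γ : Type*} [Group Γ] [Countable Γ] [DecidableEq Γ]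
    (A : lp (fun _ : Γ => ℂ) 2 →L[ℂ] lp (fun _ : Γ => ℂ) 2) (Γ₀ : Finset Γ) : Prop :=
  ∀ t s : Γ, t * s⁻¹ ∉ Γ₀ → A (lp.single 2 s (1 : ℂ)) t = 0

section Helpers

open scoped ENNReal

variable {Γ : Type*}

private lemma rpow_two_eq' (a : ℝ) : a ^ ((2:ℝ≥0∞)).toReal = a ^ 2 := by
  rw [show ((2:ℝ≥0∞)).toReal = ((2:ℕ):ℝ) by norm_num, Real.rpow_natCast]

private lemma l2_norm_sq (f : lp (fun _ : Γ => ℂ) 2) : ‖f‖ ^ 2 = ∑' x, ‖f x‖ ^ 2 := by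
  have h := lp.norm_rpow_eq_tsum (p := 2) (by norm_num) f
  simp only [rpow_two_eq'] at h
  exact h

private lemma l2_summable (f : lp (fun _ : Γ => ℂ) 2) : Summable fun x => ‖f x‖ ^ 2 := by
  have h := (lp.memℓp f).summable (p := 2) (by norm_num)
  simp only [rpow_two_eq'] at h
  exact h

/-- Evaluation at a point as a continuous linear map on `ℓ²`. -/
private noncomputable def evalE (t : Γ) : lp (fun _ : Γ => ℂ) 2 →L[ℂ] ℂ :=
  LinearMap.mkContinuous
    { toFun := fun f => f t
      map_add' := fun f g => by simp [lp.coeFn_add]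
      map_smul' := fun c f => by simp [lp.coeFn_smul] }
    1 (fun f => by simp only [LinearMap.coe_mk, AddHom.coe_mk, one_mul]; exact lp.norm_apply_le_norm (by norm_num) f t)

end Helpers

set_option maxHeartbeats 1000000 in
/-- If `A` is a band operator with band width `Γ₀` and `(v_n)` is
an inflating sequence for `𝒴`, then each `R_{v_n} P_{Y_n} A P_{Y_n} R_{v_n}⁻¹`
is a band operator with band width `Γ₀`, and the strong sum
`Op((P_{Y_n} A P_{Y_n})) = Σ_n R_{v_n} P_{Y_n} A P_{Y_n} R_{v_n}⁻¹` is a band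
operator with band width `Γ₀` as well. -/
theorem op_of_finite_sections_is_band
    {Γ : Type*} [Group Γ] [Countable Γ] [DecidableEq Γ]
    (Y : ℕ → Finset Γ) (hmono : Monotone Y)
    (hcup : ⋃ n, (Y n : Set Γ) = Set.univ)
    (v : ℕ → Γ)
    (hinfl : ∀ m n, m ≠ n →
      Disjoint ((fun y => y * (v m)⁻¹) '' (Y m : Set Γ))
               ((fun y => y * (v n)⁻¹) '' (Y n : Set Γ)))
    (P : ℕ → (lp (fun _ : Γ => ℂ) 2 →L[ℂ] lp (fun _ : Γ => ℂ) 2))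
    (hP : ∀ (n : ℕ) (u : lp (fun _ : Γ => ℂ) 2) (x : Γ),
      P n u x = ((Y n : Set Γ)).indicator (fun y => u y) x)
    (R : Γ → (lp (fun _ : Γ => ℂ) 2 →L[ℂ] lp (fun _ : Γ => ℂ) 2))
    (hR : ∀ (r : Γ) (u : lp (fun _ : Γ => ℂ) 2) (x : Γ), R r u x = u (x * r))
    (A : lp (fun _ : Γ => ℂ) 2 →L[ℂ] lp (fun _ : Γ => ℂ) 2)
    (Γ₀ : Finset Γ) (hA : HasBandWidth A Γ₀) :
    (∀ n, HasBandWidth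
      ((R (v n)).comp (((P n).comp (A.comp (P n))).comp (R ((v n)⁻¹)))) Γ₀) ∧
    ∃ T : lp (fun _ : Γ => ℂ) 2 →L[ℂ] lp (fun _ : Γ => ℂ) 2,
      (∀ u, HasSum
        (fun n => ((R (v n)).comp (((P n).comp (A.comp (P n))).comp (R ((v n)⁻¹)))) u)
        (T u)) ∧
      HasBandWidth T Γ₀ := by
  classical
  set S : ℕ → (lp (fun _ : Γ => ℂ) 2 →L[ℂ] lp (fun _ : Γ => ℂ) 2) :=
    fun n => (R (v n)).comp (((P n).comp (A.comp (P n))).comp (R ((v n)⁻¹))) with hSdef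
  -- pointwise formula for `S n`
  have hSapp : ∀ (n : ℕ) (u : lp (fun _ : Γ => ℂ) 2) (x : Γ),
      S n u x = ((Y n : Set Γ)).indicator
        (fun y => A (P n (R ((v n)⁻¹) u)) y) (x * v n) := by
    intro n u x
    simp only [hSdef, ContinuousLinearMap.comp_apply]
    rw [hR, hP]
  -- Part 1: each `S n` is a band operator
  have hband : ∀ n, HasBandWidth (S n) Γ₀ := by
    intro n t s hts
    rw [hSapp]
    by_cases hty : t * v n ∈ (Y n : Set Γ)
    · rw [Set.indicator_of_mem hty]
      by_cases hsy : s * v n ∈ (Y n : Set Γ)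
      · have hps : P n (R ((v n)⁻¹) (lp.single 2 s (1:ℂ))) = lp.single 2 (s * v n) (1:ℂ) := by
          apply lp.ext; funext x
          rw [hP]
          by_cases hx : x = s * v n
          · subst hx
            rw [Set.indicator_of_mem hsy, hR, lp.single_apply_self]
            have : s * v n * (v n)⁻¹ = s := by group
            rw [this, lp.single_apply_self]
          · rw [lp.single_apply_ne _ _ _ hx]
            by_cases hxy : x ∈ (Y n : Set Γ)
            · rw [Set.indicator_of_mem hxy, hR, lp.single_apply_ne]
              intro hc
              exact hx (by rw [← hc]; group)
            · rw [Set.indicator_of_notMem hxy]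
        rw [hps]
        refine hA _ _ ?_
        have : t * v n * (s * v n)⁻¹ = t * s⁻¹ := by group
        rw [this]; exact hts
      · have hps : P n (R ((v n)⁻¹) (lp.single 2 s (1:ℂ))) = 0 := by
          apply lp.ext; funext x
          rw [hP]
          by_cases hxy : x ∈ (Y n : Set Γ)
          · rw [Set.indicator_of_mem hxy, hR, lp.single_apply_ne]
            · simp
            · intro hc
              exact hsy (by rwa [show x = s * v n by rw [← hc]; group] at hxy)
          · rw [Set.indicator_of_notMem hxy]; simp
        rw [hps]
        simp
    · rw [Set.indicator_of_notMem hty]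
  -- the submodules of functions supported in `Y n v n⁻¹`
  set K : ℕ → Submodule ℂ (lp (fun _ : Γ => ℂ) 2) := fun n =>
    { carrier := {f | ∀ x : Γ, x * v n ∉ (Y n : Set Γ) → f x = 0}
      add_mem' := fun {f g} hf hg x hx => by
        simp only [lp.coeFn_add, Pi.add_apply, hf x hx, hg x hx, add_zero]
      zero_mem' := fun x hx => by simp
      smul_mem' := fun c f hf x hx => by
        simp only [lp.coeFn_smul, Pi.smul_apply, hf x hx, smul_zero] } with hKdef
  have hmemK : ∀ (n : ℕ) (u : lp (fun _ : Γ => ℂ) 2), S n u ∈ K n := by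
    intro n u x hx
    rw [hSapp, Set.indicator_of_notMem hx]
  -- orthogonality
  have horth : OrthogonalFamily ℂ (fun n => K n) (fun n => (K n).subtypeₗᵢ) := by
    intro m n hmn f g
    simp only [Submodule.coe_subtypeₗᵢ, Submodule.subtype_apply]
    rw [lp.inner_eq_tsum]
    have hz : ∀ x : Γ, (inner ℂ ((f : lp (fun _ : Γ => ℂ) 2) x)
        ((g : lp (fun _ : Γ => ℂ) 2) x) : ℂ) = 0 := by
      intro x
      by_cases hm : x * v m ∈ (Y m : Set Γ)
      · by_cases hn : x * v n ∈ (Y n : Set Γ)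
        · exact absurd (⟨x * v n, hn, by group⟩ : x ∈ (fun y => y * (v n)⁻¹) '' (Y n : Set Γ))
            (Set.disjoint_left.1 (hinfl m n hmn) ⟨x * v m, hm, by group⟩)
        · rw [g.2 x hn, inner_zero_right]
      · rw [f.2 x hm, inner_zero_left]
    simp only [hz, tsum_zero]
  -- isometry property of `R r` and contraction property of `P n`
  have hRnorm : ∀ (r : Γ) (w : lp (fun _ : Γ => ℂ) 2), ‖R r w‖ = ‖w‖ := by
    intro r w
    have h1 : ‖R r w‖ ^ 2 = ‖w‖ ^ 2 := by
      rw [l2_norm_sq, l2_norm_sq]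
      rw [tsum_congr (fun x => by rw [hR] :
        ∀ x : Γ, ‖R r w x‖ ^ 2 = ‖w (x * r)‖ ^ 2)]
      exact (Equiv.mulRight r).tsum_eq (fun x => ‖w x‖ ^ 2)
    nlinarith [norm_nonneg (R r w), norm_nonneg w]
  have hPnorm : ∀ (n : ℕ) (w : lp (fun _ : Γ => ℂ) 2), ‖P n w‖ ≤ ‖w‖ := by
    intro n w
    have h1 : ‖P n w‖ ^ 2 ≤ ‖w‖ ^ 2 := by
      rw [l2_norm_sq, l2_norm_sq]
      refine Summable.tsum_le_tsum (fun x => ?_) (l2_summable _) (l2_summable _)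
      rw [hP]
      by_cases hx : x ∈ (Y n : Set Γ)
      · rw [Set.indicator_of_mem hx]
      · rw [Set.indicator_of_notMem hx]
        have h2 : (0:ℝ) ≤ ‖(w : ∀ _ : Γ, ℂ) x‖ ^ 2 := by positivity
        simpa using h2
    nlinarith [norm_nonneg (P n w), norm_nonneg w]
  have hSnorm : ∀ (n : ℕ) (u : lp (fun _ : Γ => ℂ) 2),
      ‖S n u‖ ≤ ‖A‖ * ‖P n (R ((v n)⁻¹) u)‖ := by
    intro n u
    have h0 : S n u = R (v n) (P n (A (P n (R ((v n)⁻¹) u)))) := by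
      simp [hSdef, ContinuousLinearMap.comp_apply]
    rw [h0, hRnorm]
    exact le_trans (hPnorm _ _) (A.le_opNorm _)
  -- bound on partial sums of `‖P n (R (v n)⁻¹ u)‖²`
  have hgsum : ∀ (u : lp (fun _ : Γ => ℂ) 2) (t : Finset ℕ),
      ∑ n ∈ t, ‖P n (R ((v n)⁻¹) u)‖ ^ 2 ≤ ‖u‖ ^ 2 := by
    intro u t
    have hgn : ∀ n : ℕ, ‖P n (R ((v n)⁻¹) u)‖ ^ 2
        = ∑ x ∈ Y n, ‖u (x * (v n)⁻¹)‖ ^ 2 := by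
      intro n
      rw [l2_norm_sq]
      rw [tsum_eq_sum (s := Y n) (fun x hx => by
        rw [hP, Set.indicator_of_notMem (by exact_mod_cast hx)]; simp)]
      refine Finset.sum_congr rfl fun x hx => ?_
      rw [hP, Set.indicator_of_mem (by exact_mod_cast hx), hR]
    have hdisj : (↑t : Set ℕ).Pairwise
        (Function.onFun Disjoint fun n => (Y n).image (· * (v n)⁻¹)) := by
      intro m _ n _ hmn
      rw [Function.onFun, ← Finset.disjoint_coe]
      rw [Finset.coe_image, Finset.coe_image]
      exact hinfl m n hmn
    calc ∑ n ∈ t, ‖P n (R ((v n)⁻¹) u)‖ ^ 2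
        = ∑ n ∈ t, ∑ z ∈ (Y n).image (· * (v n)⁻¹), ‖u z‖ ^ 2 := by
          refine Finset.sum_congr rfl fun n _ => ?_
          rw [hgn, Finset.sum_image (fun a _ b _ h => by
            exact mul_right_cancel h)]
      _ = ∑ z ∈ t.biUnion (fun n => (Y n).image (· * (v n)⁻¹)), ‖u z‖ ^ 2 :=
          (Finset.sum_biUnion hdisj).symm
      _ ≤ ∑' z, ‖u z‖ ^ 2 :=
          Summable.sum_le_tsum _ (fun _ _ => by positivity) (l2_summable u)
      _ = ‖u‖ ^ 2 := (l2_norm_sq u).symm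
  -- summability of the squares of the norms
  have hsum2 : ∀ u : lp (fun _ : Γ => ℂ) 2, Summable (fun n => ‖S n u‖ ^ 2) := by
    intro u
    have h1 : Summable (fun n => ‖P n (R ((v n)⁻¹) u)‖ ^ 2) :=
      summable_of_sum_le (fun n => by positivity) (fun t => hgsum u t)
    refine Summable.of_nonneg_of_le (fun n => by positivity) (fun n => ?_)
      (h1.mul_left (‖A‖ ^ 2))
    calc ‖S n u‖ ^ 2 ≤ (‖A‖ * ‖P n (R ((v n)⁻¹) u)‖) ^ 2 :=
          pow_le_pow_left₀ (norm_nonneg _) (hSnorm n u) 2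
      _ = ‖A‖ ^ 2 * ‖P n (R ((v n)⁻¹) u)‖ ^ 2 := by ring
  -- summability of the series of operators applied to `u`
  have hsummable : ∀ u : lp (fun _ : Γ => ℂ) 2, Summable (fun n => S n u) := by
    intro u
    have h2 : Summable (fun n => ‖(⟨S n u, hmemK n u⟩ : K n)‖ ^ 2) := hsum2 u
    have := (horth.summable_iff_norm_sq_summable (fun n => ⟨S n u, hmemK n u⟩)).2 h2
    simpa using this
  -- construct the limit operator via Banach-Steinhaus
  set g : ℕ → (lp (fun _ : Γ => ℂ) 2 →L[ℂ] lp (fun _ : Γ => ℂ) 2) :=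
    fun k => ∑ n ∈ Finset.range k, S n with hgdef
  have hg : Tendsto (fun k u => g k u) atTop (𝓝 (fun u => ∑' n, S n u)) := by
    rw [tendsto_pi_nhds]
    intro u
    have h1 := (hsummable u).hasSum.tendsto_sum_nat
    have h2 : (fun k => g k u) = fun k => ∑ n ∈ Finset.range k, S n u := by
      funext k
      exact ContinuousLinearMap.sum_apply _ _ _
    rw [h2]
    exact h1
  have hTapp : ∀ u, (continuousLinearMapOfTendsto g hg) u = ∑' n, S n u := fun u => rfl
  refine ⟨hband, continuousLinearMapOfTendsto g hg, fun u => ?_, ?_⟩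
  · rw [hTapp]
    exact (hsummable u).hasSum
  · intro t s hts
    have h0 : HasSum (fun n => S n (lp.single 2 s (1:ℂ)) t)
        ((continuousLinearMapOfTendsto g hg) (lp.single 2 s (1:ℂ)) t) :=
      (evalE t).hasSum ((hsummable (lp.single 2 s (1:ℂ))).hasSum)
    have hz : ∀ n, S n (lp.single 2 s (1:ℂ)) t = 0 := fun n => hband n t s hts
    simp only [hz] at h0
    exact h0.unique hasSum_zero
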